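/- Let W_e and W be real m×m positive definite matrices with spectral decompositions W_e = N S² Nᵀ and W = Ñ S̃² Ñᵀ, where N and Ñ are m×m orthogonal matrices and S, S̃ are m×m diagonal matrices with positive diagonal entries. Set E = W − W_e and O = S⁻¹ Nᵀ E N S⁻¹, and assume ‖O‖₂ < 1. Define Ẽ = S Nᵀ Ñ S̃⁻² Ñᵀ N S − I_m. Then Ẽ = (I_m + O)⁻¹ − I_m; consequently ‖Ẽ‖₂ ≤ ‖O‖₂ / (1 − ‖O‖₂). Moreover ‖O‖₂ = ‖W_e^{-1/2} E W_e^{-1/2}‖₂, where W_e^{-1/2} is the inverse of the positive definite square root of W_e. -/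

import Mathlib

open Matrix

/-- Spectral norm (largest singular value / ℓ²→ℓ² operator norm) of a real matrix. -/
noncomputable def specNorm {α β : Type*} [Fintype α] [Fintype β] [DecidableEq α] [DecidableEq β]
    (A : Matrix α β ℝ) : ℝ :=
  ‖(Matrix.toEuclideanLin A).toContinuousLinearMap‖

section
open scoped ComplexOrder

/-- The positive semidefinite square root, with the definition `Matrix.PosSemidef.sqrt` had in
Mathlib (December 2024); that definition has since been removed from Mathlib. -/
noncomputable def Matrix.PosSemidef.sqrt {n 𝕜 : Type*} [Fintype n] [DecidableEq n] [RCLike 𝕜]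
    {A : Matrix n n 𝕜} (hA : A.PosSemidef) : Matrix n n 𝕜 :=
  hA.1.eigenvectorUnitary.1 * diagonal ((↑) ∘ (Real.sqrt ∘ hA.1.eigenvalues)) *
  (star hA.1.eigenvectorUnitary : Matrix n n 𝕜)

end

section lemmas
variable {m : ℕ}

lemma specNorm_def (A : Matrix (Fin m) (Fin m) ℝ) : specNorm A = ‖toEuclideanCLM (𝕜 := ℝ) A‖ := rfl

lemma specNorm_nonneg (A : Matrix (Fin m) (Fin m) ℝ) : 0 ≤ specNorm A := by
  rw [specNorm_def]; exact norm_nonneg _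

lemma specNorm_mul_le (A B : Matrix (Fin m) (Fin m) ℝ) :
    specNorm (A * B) ≤ specNorm A * specNorm B := by
  simp only [specNorm_def, _root_.map_mul]; exact norm_mul_le _ _

lemma specNorm_neg (A : Matrix (Fin m) (Fin m) ℝ) : specNorm (-A) = specNorm A := by
  simp only [specNorm_def, map_neg, norm_neg]

lemma specNorm_add_le (A B : Matrix (Fin m) (Fin m) ℝ) :
    specNorm (A + B) ≤ specNorm A + specNorm B := by
  simp only [specNorm_def, map_add]; exact norm_add_le _ _

lemma specNorm_one_le : specNorm (1 : Matrix (Fin m) (Fin m) ℝ) ≤ 1 := by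
  rw [specNorm_def, _root_.map_one]; exact ContinuousLinearMap.norm_id_le

lemma specNorm_ortho_le {N : Matrix (Fin m) (Fin m) ℝ} (hN : Nᵀ * N = 1) : specNorm N ≤ 1 := by
  have h : specNorm N * specNorm N ≤ 1 := by
    rw [specNorm_def]
    have : ‖toEuclideanCLM (𝕜 := ℝ) N‖ * ‖toEuclideanCLM (𝕜 := ℝ) N‖
        = ‖star (toEuclideanCLM (𝕜 := ℝ) N) * toEuclideanCLM (𝕜 := ℝ) N‖ :=
      (CStarRing.norm_star_mul_self).symm
    rw [this, ← map_star, ← _root_.map_mul (toEuclideanCLM (𝕜 := ℝ)) (star N) N,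
      Matrix.star_eq_conjTranspose, conjTranspose_eq_transpose_of_trivial, hN, _root_.map_one]
    exact ContinuousLinearMap.norm_id_le
  nlinarith [specNorm_nonneg N]

lemma specNorm_conj {N A : Matrix (Fin m) (Fin m) ℝ} (hN : Nᵀ * N = 1) (hN' : N * Nᵀ = 1) :
    specNorm (N * A * Nᵀ) = specNorm A := by
  have key : ∀ (U V B : Matrix (Fin m) (Fin m) ℝ), specNorm U ≤ 1 → specNorm V ≤ 1 →
      specNorm (U * B * V) ≤ specNorm B := by
    intro U V B hU hV
    calc specNorm (U * B * V) ≤ specNorm (U * B) * specNorm V := specNorm_mul_le _ _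
    _ ≤ specNorm (U * B) := by
        nlinarith [specNorm_nonneg (U * B), specNorm_nonneg V]
    _ ≤ specNorm U * specNorm B := specNorm_mul_le _ _
    _ ≤ specNorm B := by nlinarith [specNorm_nonneg U, specNorm_nonneg B]
  have hNt : Nᵀᵀ * Nᵀ = 1 := by rwa [transpose_transpose]
  refine le_antisymm (key _ _ _ (specNorm_ortho_le hN) (specNorm_ortho_le hNt)) ?_
  have : A = Nᵀ * (N * A * Nᵀ) * N := by
    simp only [← mul_assoc, hN, one_mul]
    rw [mul_assoc, hN, mul_one]
  nth_rewrite 1 [this]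
  exact key _ _ _ (specNorm_ortho_le hNt) (specNorm_ortho_le hN)
end lemmas

set_option maxHeartbeats 1000000 in
/-- Core algebraic step of Theorem 3: the perturbation Ẽ equals (I + O)⁻¹ − I, hence is bounded
by ‖O‖₂/(1 − ‖O‖₂), and ‖O‖₂ coincides with the relative perturbation η. -/
theorem stmt_15 {m : ℕ}
    (We W : Matrix (Fin m) (Fin m) ℝ) (hWe : We.PosDef) (hW : W.PosDef)
    (N Nt : Matrix (Fin m) (Fin m) ℝ) (s t : Fin m → ℝ)
    (hN : Nᵀ * N = 1) (hNt : Ntᵀ * Nt = 1) (hs : ∀ i, 0 < s i) (ht : ∀ i, 0 < t i)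
    (hWe_spec : We = N * Matrix.diagonal (fun i => s i ^ 2) * Nᵀ)
    (hW_spec : W = Nt * Matrix.diagonal (fun i => t i ^ 2) * Ntᵀ)
    (E O : Matrix (Fin m) (Fin m) ℝ)
    (hE : E = W - We)
    (hO : O = Matrix.diagonal (fun i => (s i)⁻¹) * Nᵀ * E * N *
        Matrix.diagonal (fun i => (s i)⁻¹))
    (hOnorm : specNorm O < 1)
    (Et : Matrix (Fin m) (Fin m) ℝ)
    (hEt : Et = Matrix.diagonal s * Nᵀ * Nt * Matrix.diagonal (fun i => (t i ^ 2)⁻¹) *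
        Ntᵀ * N * Matrix.diagonal s - 1) :
    Et = (1 + O)⁻¹ - 1 ∧
    specNorm Et ≤ specNorm O / (1 - specNorm O) ∧
    specNorm O = specNorm ((hWe.posSemidef.sqrt)⁻¹ * E * (hWe.posSemidef.sqrt)⁻¹) := by
  have hNN : N * Nᵀ = 1 := mul_eq_one_comm.mp hN
  have hNtNt : Nt * Ntᵀ = 1 := mul_eq_one_comm.mp hNt
  have hsne : ∀ i, s i ≠ 0 := fun i => (hs i).ne'
  have htne : ∀ i, t i ≠ 0 := fun i => (ht i).ne'
  have d1 : Matrix.diagonal s * Matrix.diagonal (fun i => (s i)⁻¹) = 1 := by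
    rw [diagonal_mul_diagonal,
      show (fun i => s i * (s i)⁻¹) = fun _ => (1 : ℝ) from funext fun i => mul_inv_cancel₀ (hsne i),
      diagonal_one]
  have d2 : Matrix.diagonal (fun i => (s i)⁻¹) * Matrix.diagonal s = 1 := by
    rw [diagonal_mul_diagonal,
      show (fun i => (s i)⁻¹ * s i) = fun _ => (1 : ℝ) from funext fun i => inv_mul_cancel₀ (hsne i),
      diagonal_one]
  have d3 : Matrix.diagonal (fun i => (s i)⁻¹) * Matrix.diagonal (fun i => s i ^ 2)
      = Matrix.diagonal s := by
    rw [diagonal_mul_diagonal,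
      show (fun i => (s i)⁻¹ * s i ^ 2) = s from funext fun i => by rw [sq, ← mul_assoc, inv_mul_cancel₀ (hsne i), one_mul]]
  have d4 : Matrix.diagonal (fun i => s i ^ 2) * Matrix.diagonal (fun i => (s i)⁻¹)
      = Matrix.diagonal s := by
    rw [diagonal_mul_diagonal,
      show (fun i => s i ^ 2 * (s i)⁻¹) = s from funext fun i => by rw [sq, mul_assoc, mul_inv_cancel₀ (hsne i), mul_one]]
  have dss : Matrix.diagonal s * Matrix.diagonal s = Matrix.diagonal (fun i => s i ^ 2) := by
    rw [diagonal_mul_diagonal]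
    exact congrArg _ (funext fun i => (sq (s i)).symm)
  have t1 : Matrix.diagonal (fun i => t i ^ 2) * Matrix.diagonal (fun i => (t i ^ 2)⁻¹) = 1 := by
    rw [diagonal_mul_diagonal,
      show (fun i => t i ^ 2 * (t i ^ 2)⁻¹) = fun _ => (1 : ℝ) from
        funext fun i => mul_inv_cancel₀ (pow_ne_zero 2 (htne i)), diagonal_one]
  have t2 : Matrix.diagonal (fun i => (t i ^ 2)⁻¹) * Matrix.diagonal (fun i => t i ^ 2) = 1 := by
    rw [diagonal_mul_diagonal,
      show (fun i => (t i ^ 2)⁻¹ * t i ^ 2) = fun _ => (1 : ℝ) from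
        funext fun i => inv_mul_cancel₀ (pow_ne_zero 2 (htne i)), diagonal_one]
  -- right-assoc cancellation lemmas
  have mk : ∀ {P Q R : Matrix (Fin m) (Fin m) ℝ}, P * Q = R →
      ∀ X : Matrix (Fin m) (Fin m) ℝ, P * (Q * X) = R * X := by
    intro P Q R h X; rw [← Matrix.mul_assoc, h]
  have c1 := mk hN
  have c2 := mk hNN
  have c3 := mk hNt
  have c4 := mk hNtNt
  have c5 := mk d1
  have c6 := mk d2
  have c7 := mk d3
  have c8 := mk d4
  have c9 := mk dss
  have c10 := mk t1
  have c11 := mk t2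
  have key1 : (Et + 1) * (1 + O) = 1 := by
    rw [hEt, hO, hE, hW_spec, hWe_spec]
    simp only [Matrix.mul_assoc, Matrix.mul_sub, Matrix.sub_mul, Matrix.mul_add,
      Matrix.add_mul, Matrix.mul_one, Matrix.one_mul, Matrix.sub_mul, c1, c2, c3, c4, c5,
      c6, c7, c8, c9, c10, c11, hN, hNN, hNt, hNtNt, d1, d2, d3, d4, dss, t1, t2]
    abel
  have hinvO : (1 + O)⁻¹ = Et + 1 := Matrix.inv_eq_left_inv key1
  have part1 : Et = (1 + O)⁻¹ - 1 := by rw [hinvO]; abel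
  -- part 2
  have h2 : Et = -((Et + 1) * O) := by
    have h : Et + (Et + 1) * O = ((Et + 1) * (1 + O)) - 1 := by
      rw [Matrix.mul_add, Matrix.mul_one]; abel
    rw [key1, sub_self] at h
    exact eq_neg_of_add_eq_zero_left h
  have o0 := specNorm_nonneg O
  have e0 := specNorm_nonneg Et
  have part2 : specNorm Et ≤ specNorm O / (1 - specNorm O) := by
    have hb : specNorm Et ≤ (specNorm Et + 1) * specNorm O := by
      calc specNorm Et = specNorm ((Et + 1) * O) := by conv_lhs => rw [h2, specNorm_neg]
      _ ≤ specNorm (Et + 1) * specNorm O := specNorm_mul_le _ _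
      _ ≤ (specNorm Et + 1) * specNorm O := by
          have h3 := specNorm_add_le Et 1
          have h4 : specNorm (1 : Matrix (Fin m) (Fin m) ℝ) ≤ 1 := specNorm_one_le
          nlinarith
    rw [le_div_iff₀ (by linarith)]
    nlinarith
  -- part 3
  have hPSD : (N * Matrix.diagonal s * Nᵀ).PosSemidef := by
    have hd : (Matrix.diagonal s).PosSemidef :=
      Matrix.posSemidef_diagonal_iff.mpr fun i => (hs i).le
    have := hd.mul_mul_conjTranspose_same N
    rwa [conjTranspose_eq_transpose_of_trivial] at this
  have hsq : (N * Matrix.diagonal s * Nᵀ) ^ 2 = We := by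
    rw [pow_two, hWe_spec]
    simp only [Matrix.mul_assoc, Matrix.one_mul, Matrix.mul_one, c1, c2, c5, c6, c9, hN, hNN, d1, d2, dss]
  have hsqrt : hWe.posSemidef.sqrt = N * Matrix.diagonal s * Nᵀ :=
    by
      have h1 : hWe.posSemidef.sqrt = cfc Real.sqrt We := by
        rw [hWe.posSemidef.1.cfc_eq]
        simp [Matrix.IsHermitian.cfc, Matrix.PosSemidef.sqrt, Unitary.conjStarAlgAut_apply]
      open scoped MatrixOrder in
      rw [h1, ← cfcₙ_eq_cfc (hf0 := Real.sqrt_zero), ← CFC.sqrt_eq_real_sqrt We hWe.posSemidef.nonneg]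
      open scoped MatrixOrder in
      exact CFC.sqrt_unique (by rw [← sq, hsq]) hPSD.nonneg
  have hinv : (hWe.posSemidef.sqrt)⁻¹ = N * Matrix.diagonal (fun i => (s i)⁻¹) * Nᵀ := by
    apply Matrix.inv_eq_left_inv
    rw [hsqrt]
    simp only [Matrix.mul_assoc, Matrix.one_mul, Matrix.mul_one, c1, c2, c5, c6, hN, hNN, d1, d2]
  have hconj : (hWe.posSemidef.sqrt)⁻¹ * E * (hWe.posSemidef.sqrt)⁻¹ = N * O * Nᵀ := by
    rw [hinv, hO]
    simp only [Matrix.mul_assoc, Matrix.one_mul, Matrix.mul_one, c1, c2, hN, hNN]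
  have part3 : specNorm O
      = specNorm ((hWe.posSemidef.sqrt)⁻¹ * E * (hWe.posSemidef.sqrt)⁻¹) := by
    rw [hconj, specNorm_conj hN hNN]
  exact ⟨part1, part2, part3⟩
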